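/- For every natural number H, every natural number k with 1 ≤ k ≤ H − 1, and every real number R_max > 0, there exist a finite state type S, a finite nonempty action type A, a transition function T : S → A → S, a reward function r : S → A → ℝ, a score function u : S → A → ℝ, and an initial state s₀ : S, such that: (i) |r(s, a)| ≤ R_max for every state s and action a; (ii) every k-lookahead policy π_k with u-tiebreaking has H-step return R_H(π_k, s₀) = 0; and (iii) there exists a policy π* with H-step return R_H(π*, s₀) ≥ R_max · ⌊(H − 1)/(k + 1)⌋. Consequently, the additive suboptimality gap max_π R_H(π, s₀) − R_H(π_k, s₀) of the truncated k-lookahead policy is at least R_max · ⌊(H − 1)/(k + 1)⌋, growing linearly in the ratio H/(k + 1). -/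

import Mathlib

/-- Trajectory of a policy `π` in a deterministic environment with transition `T`,
starting from `s₀`: `s_0 = s₀`, `s_{t+1} = T (s_t) (π (s_t))`. -/
def traj {S A : Type*} (T : S → A → S) (π : S → A) (s₀ : S) : ℕ → S
  | 0 => s₀
  | t + 1 => T (traj T π s₀ t) (π (traj T π s₀ t))

/-- `H`-step return of policy `π` from `s₀`: `∑_{t=0}^{H-1} r (s_t) (π (s_t))`. -/
noncomputable def ret {S A : Type*} (T : S → A → S) (r : S → A → ℝ)
    (π : S → A) (s₀ : S) (H : ℕ) : ℝ :=
  ∑ t ∈ Finset.range H, r (traj T π s₀ t) (π (traj T π s₀ t))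

/-- Truncated lookahead value: `Q̃_0 ≡ 0`, and
`Q̃_{j+1}(s, a) = r(s, a) + max_{a'} Q̃_j(T(s, a), a')`;
in particular `Q̃_1 = r`, and all rewards beyond the lookahead depth are treated as zero. -/
noncomputable def Qtil {S A : Type*} [Fintype A] [Nonempty A]
    (T : S → A → S) (r : S → A → ℝ) : ℕ → S → A → ℝ
  | 0 => fun _ _ => 0
  | j + 1 => fun s a =>
      r s a + Finset.univ.sup' Finset.univ_nonempty (fun a' => Qtil T r j (T s a) a')

/-- The cycle environment: `go = true` advances one step on the cycle `0, 1, …, k`,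
`stay = false` stays put. -/
def Tk (k : ℕ) : Fin (k+1) → Bool → Fin (k+1) :=
  fun s a => if a then ⟨(s.val+1) % (k+1), Nat.mod_lt _ (Nat.succ_pos k)⟩ else s

/-- Reward `R` when at state `k`, else `0`. -/
noncomputable def rk (k : ℕ) (R : ℝ) : Fin (k+1) → Bool → ℝ :=
  fun s _ => if s.val = k then R else 0

lemma Qtil_zero (k : ℕ) (R : ℝ) : ∀ j (s : Fin (k+1)), s.val + j ≤ k → ∀ a,
    Qtil (Tk k) (rk k R) j s a = 0 := by
  intro j
  induction j with
  | zero => intro s _ a; rfl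
  | succ j ih =>
    intro s hs a
    have hsk : s.val ≠ k := by omega
    have hr : rk k R s a = 0 := by simp [rk, hsk]
    have hT : (Tk k s a).val + j ≤ k := by
      cases a with
      | false => simpa [Tk] using by omega
      | true =>
        have hlt : s.val + 1 < k + 1 := by omega
        have hval : (Tk k s true).val = s.val + 1 := by
          simp [Tk, Nat.mod_eq_of_lt hlt]
        omega
    have hall : ∀ a', Qtil (Tk k) (rk k R) j (Tk k s a) a' = 0 := fun a' => ih _ hT a'
    simp only [Qtil, hr]
    rw [show (fun a' => Qtil (Tk k) (rk k R) j (Tk k s a) a') = fun _ => (0:ℝ) from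
      funext hall]
    simp

lemma traj_go (k : ℕ) (hk : 1 ≤ k) : ∀ t, traj (Tk k) (fun _ => true) 0 t =
    ⟨t % (k+1), Nat.mod_lt _ (Nat.succ_pos k)⟩ := by
  intro t
  induction t with
  | zero =>
    simp only [traj]
    apply Fin.ext
    simp
  | succ t ih =>
    have hmod : (t+1) % (k+1) = (t % (k+1) + 1) % (k+1) := by
      conv_lhs => rw [Nat.add_mod]
      rw [Nat.mod_eq_of_lt (show 1 < k+1 by omega)]
    simp only [traj, ih]
    apply Fin.ext
    simp only [Tk, if_pos rfl, Fin.val_mk]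
    exact hmod.symm

theorem truncated_lookahead_suboptimality :
    ∀ H k : ℕ, 1 ≤ k → k ≤ H - 1 → ∀ Rmax : ℝ, 0 < Rmax →
    ∃ (S A : Type) (_ : Fintype S) (iA : Fintype A) (nA : Nonempty A)
      (T : S → A → S) (r : S → A → ℝ) (u : S → A → ℝ) (s₀ : S),
      (∀ s a, |r s a| ≤ Rmax) ∧
      (∀ πk : S → A,
        (∀ s a, @Qtil S A iA nA T r k s a ≤ @Qtil S A iA nA T r k s (πk s) ∧
          (@Qtil S A iA nA T r k s a = @Qtil S A iA nA T r k s (πk s) →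
            u s a ≤ u s (πk s))) →
        ret T r πk s₀ H = 0) ∧
      (∃ π' : S → A, Rmax * (((H - 1) / (k + 1) : ℕ) : ℝ) ≤ ret T r π' s₀ H) := by
  intro H k hk1 hkH Rmax hR
  refine ⟨Fin (k+1), Bool, inferInstance, inferInstance, inferInstance,
    Tk k, rk k Rmax, (fun _ a => if a then 0 else 1), 0, ?_, ?_, ?_⟩
  · intro s a
    simp only [rk]
    split <;> simp [abs_of_pos hR, le_of_lt hR, abs_of_nonneg, le_refl]
  · -- every k-lookahead policy with u-tiebreaking gets return 0
    intro πk hπ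
    have h0k : (0 : Fin (k+1)).val = 0 := rfl
    have hQ : ∀ a, Qtil (Tk k) (rk k Rmax) k 0 a = 0 := by
      intro a
      exact Qtil_zero k Rmax k 0 (by simp [h0k]) a
    have hπ0 : πk 0 = false := by
      rcases hπ 0 false with ⟨_, htie⟩
      have heq : Qtil (Tk k) (rk k Rmax) k 0 false
          = Qtil (Tk k) (rk k Rmax) k 0 (πk 0) := by rw [hQ, hQ]
      have := htie heq
      by_contra hne
      have : πk 0 = true := by
        cases h : πk 0 with
        | false => exact absurd h hne
        | true => rfl
      rw [this] at htie
      have := htie (by rw [hQ, hQ])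
      norm_num at this
    have htraj : ∀ t, traj (Tk k) πk 0 t = 0 := by
      intro t
      induction t with
      | zero => rfl
      | succ t ih => simp [traj, ih, hπ0, Tk]
    have hr0 : rk k Rmax 0 (πk 0) = 0 := by
      simp only [rk]
      rw [if_neg (by rw [h0k]; omega)]
    simp only [ret, htraj, hr0]
    simp
  · -- always go
    refine ⟨fun _ => true, ?_⟩
    set N := (H - 1) / (k + 1) with hN
    have htr : ∀ t, traj (Tk k) (fun _ => true) 0 t =
        ⟨t % (k+1), Nat.mod_lt _ (Nat.succ_pos k)⟩ := traj_go k hk1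
    have hterm : ∀ t, rk k Rmax (traj (Tk k) (fun _ => true) 0 t) true =
        if t % (k+1) = k then Rmax else 0 := by
      intro t; rw [htr t]; rfl
    have hnonneg : ∀ t, (0:ℝ) ≤ if t % (k+1) = k then Rmax else 0 := by
      intro t; split <;> simp [le_of_lt hR]
    -- the image of range N under m ↦ k + m*(k+1)
    set f : ℕ → ℕ := fun m => k + m * (k+1) with hf
    have hinj : Set.InjOn f (Finset.range N) := by
      intro a _ b _ hab
      simp only [hf] at hab
      exact Nat.eq_of_mul_eq_mul_right (Nat.succ_pos k) (Nat.add_left_cancel hab)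
    have hsub : (Finset.range N).image f ⊆ Finset.range H := by
      intro t ht
      rcases Finset.mem_image.mp ht with ⟨m, hm, rfl⟩
      simp only [Finset.mem_range] at hm ⊢
      have hmN : m + 1 ≤ N := hm
      have : (m + 1) * (k + 1) ≤ N * (k + 1) := Nat.mul_le_mul_right _ hmN
      have hNd : N * (k + 1) ≤ H - 1 := Nat.div_mul_le_self _ _
      have hH2 : 2 ≤ H := by omega
      have e1 : (m + 1) * (k + 1) ≤ H - 1 := le_trans this hNd
      have e2 : k + m * (k + 1) + 1 = (m + 1) * (k + 1) := by ring
      simp only [hf]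
      omega
    have hmod : ∀ m, f m % (k+1) = k := by
      intro m
      simp only [hf]
      rw [Nat.add_mul_mod_self_right]
      exact Nat.mod_eq_of_lt (by omega)
    have hsum : ret (Tk k) (rk k Rmax) (fun _ => true) 0 H =
        ∑ t ∈ Finset.range H, (if t % (k+1) = k then Rmax else 0) := by
      simp only [ret, hterm]
    rw [hsum]
    have h1 : ∑ t ∈ (Finset.range N).image f, (if t % (k+1) = k then Rmax else 0)
        ≤ ∑ t ∈ Finset.range H, (if t % (k+1) = k then Rmax else 0) := by
      apply Finset.sum_le_sum_of_subset_of_nonneg hsub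
      intro t _ _; exact hnonneg t
    have h2 : ∑ t ∈ (Finset.range N).image f, (if t % (k+1) = k then Rmax else 0)
        = N * Rmax := by
      rw [Finset.sum_image (fun a ha b hb => hinj ha hb)]
      have : ∀ m ∈ Finset.range N, (if f m % (k+1) = k then Rmax else 0) = Rmax := by
        intro m _; rw [hmod m]; simp
      rw [Finset.sum_congr rfl this]
      simp [mul_comm]
    calc Rmax * (N : ℝ) = (N : ℝ) * Rmax := by ring
    _ = ∑ t ∈ (Finset.range N).image f, (if t % (k+1) = k then Rmax else 0) := h2.symm
    _ ≤ _ := h1
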